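/- Let V be a finite subset of F_2^r of odd cardinality and let A = Σ_{v ∈ V} Γ_v. Then A² = I (the identity matrix), and consequently the rank of A over F_2 equals 2^r. -/

import Mathlib

/-- `Γ_v` : the permutation matrix over `F₂` indexed by `F₂^r` with
`(Γ_v)_{u,w} = 1` iff `u + w = v`. -/
def Gamma {r : ℕ} (v : Fin r → ZMod 2) :
    Matrix (Fin r → ZMod 2) (Fin r → ZMod 2) (ZMod 2) :=
  Matrix.of fun u w => if u + w = v then 1 else 0

lemma add_self_vec {r : ℕ} (u : Fin r → ZMod 2) : u + u = 0 := by
  funext i; exact CharTwo.add_self_eq_zero _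

lemma add_eq_iff {r : ℕ} (a b c : Fin r → ZMod 2) : a + b = c ↔ b = a + c := by
  constructor
  · intro h; rw [← h, ← add_assoc, add_self_vec, zero_add]
  · intro h; rw [h, ← add_assoc, add_self_vec, zero_add]

lemma Gamma_mul {r : ℕ} (v w : Fin r → ZMod 2) :
    Gamma v * Gamma w = Gamma (v + w) := by
  ext u x
  simp only [Matrix.mul_apply, Gamma, Matrix.of_apply]
  simp_rw [add_eq_iff u _ v, ite_mul, one_mul, zero_mul]
  rw [Finset.sum_ite_eq' (Finset.univ) (u + v) (fun y => if y + x = w then (1:ZMod 2) else 0)]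
  simp only [Finset.mem_univ, if_true]
  congr 1
  rw [add_eq_iff (u + v) x w, add_eq_iff u x (v + w), add_assoc]

lemma Gamma_zero {r : ℕ} : Gamma (0 : Fin r → ZMod 2) = 1 := by
  ext u w
  have h : (u + w = 0) ↔ (u = w) := by rw [add_eq_iff, add_zero]; exact eq_comm
  simp [Gamma, Matrix.one_apply, h]

lemma mat_add_self {r : ℕ} (M : Matrix (Fin r → ZMod 2) (Fin r → ZMod 2) (ZMod 2)) :
    M + M = 0 := by
  ext u w; exact CharTwo.add_self_eq_zero _

theorem odd_sum_sq_eq_one_and_full_rank (r : ℕ) (V : Finset (Fin r → ZMod 2))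
    (hV : Odd V.card)
    (A : Matrix (Fin r → ZMod 2) (Fin r → ZMod 2) (ZMod 2))
    (hA : A = ∑ v ∈ V, Gamma v) :
    A ^ 2 = 1 ∧ A.rank = 2 ^ r := by
  classical
  have hsq : A ^ 2 = 1 := by
    rw [sq, hA, Finset.sum_mul_sum]
    simp_rw [Gamma_mul]
    rw [← Finset.sum_product']
    rw [← Finset.sum_filter_add_sum_filter_not (V ×ˢ V) (fun p => p.1 = p.2)]
    have hdiag : ∑ p ∈ (V ×ˢ V).filter (fun p => p.1 = p.2), Gamma (p.1 + p.2) = 1 := by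
      rw [Finset.sum_nbij' (i := fun p => p.1) (j := fun v => (v, v)) (g := fun _ => (1 : Matrix (Fin r → ZMod 2) (Fin r → ZMod 2) (ZMod 2)))]
      · rw [Finset.sum_const]
        obtain ⟨k, hk⟩ := hV
        rw [hk, add_nsmul, one_nsmul, two_mul, add_nsmul,
          mat_add_self (k • (1 : Matrix (Fin r → ZMod 2) (Fin r → ZMod 2) (ZMod 2))), zero_add]
      · intro p hp
        simp only [Finset.mem_filter, Finset.mem_product] at hp
        exact hp.1.1
      · intro v hv
        simp [Finset.mem_filter, Finset.mem_product, hv]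
      · intro p hp
        simp only [Finset.mem_filter, Finset.mem_product] at hp
        exact Prod.ext rfl hp.2
      · intro v hv; rfl
      · intro p hp
        simp only [Finset.mem_filter, Finset.mem_product] at hp
        rw [hp.2, add_self_vec, Gamma_zero]
    have hoff : ∑ p ∈ (V ×ˢ V).filter (fun p => ¬ p.1 = p.2), Gamma (p.1 + p.2) = 0 := by
      apply Finset.sum_involution (g := fun p _ => Prod.swap p)
      · intro p _
        rw [Prod.fst_swap, Prod.snd_swap, add_comm p.2 p.1]
        exact mat_add_self _
      · intro p hp _
        simp only [Finset.mem_filter] at hp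
        intro h
        exact hp.2 (congrArg Prod.snd h.symm ▸ rfl)
      · intro p hp
        simp only [Finset.mem_filter, Finset.mem_product] at hp ⊢
        exact ⟨⟨hp.1.2, hp.1.1⟩, fun h => hp.2 h.symm⟩
      · intro p _; rfl
    rw [hdiag, hoff, add_zero]
  refine ⟨hsq, ?_⟩
  have hdet : A.det * A.det = 1 := by rw [← Matrix.det_mul, ← sq, hsq, Matrix.det_one]
  have : IsUnit A := (Matrix.isUnit_iff_isUnit_det A).mpr (IsUnit.of_mul_eq_one _ hdet)
  rw [Matrix.rank_of_isUnit A this]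
  simp [Fintype.card_fun]
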